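/- Let p ≥ 2, q = p/(p−1) and δ = q(q−1)/8. There exists a constant C > 0 depending only on p such that β is continuously differentiable on (0,∞)×(0,∞) and for every u, v > 0 one has 0 ≤ ∂_u β(u,v) ≤ C·max{u^{p−1}, v} and 0 ≤ ∂_v β(u,v) ≤ C·v^{q−1}. -/

import Mathlib

open Real

/-- The Nazarov–Treil Bellman auxiliary function `β`. -/
noncomputable def bell (p : ℝ) (u v : ℝ) : ℝ :=
  if u ^ p ≤ v ^ (p / (p - 1)) then
    u ^ p + v ^ (p / (p - 1)) +
      (p / (p - 1)) * (p / (p - 1) - 1) / 8 * (u ^ (2 : ℝ) * v ^ (2 - p / (p - 1)))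
  else
    u ^ p + v ^ (p / (p - 1)) +
      (p / (p - 1)) * (p / (p - 1) - 1) / 8 *
        ((2 / p) * u ^ p + (2 / (p / (p - 1)) - 1) * v ^ (p / (p - 1)))

open Set

/-- One-dimensional profile: `t^{2/p}` capped by its tangent line at `t = 1`. -/
noncomputable def hfun (p t : ℝ) : ℝ :=
  if t ≤ 1 then t ^ (2 / p) else (2 / p) * t + (1 - 2 / p)

/-- Derivative of `hfun`. -/
noncomputable def hfun' (p t : ℝ) : ℝ := (2 / p) * (min t 1) ^ (2 / p - 1)

lemma hfun_hasDerivAt {p : ℝ} (hp : 2 ≤ p) {t : ℝ} (ht : 0 < t) :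
    HasDerivAt (hfun p) (hfun' p t) t := by
  have hp0 : (0:ℝ) < p := by linarith
  rcases lt_trichotomy t 1 with h1 | h1 | h1
  · have hd : HasDerivAt (fun x : ℝ => x ^ (2/p)) (2/p * t ^ (2/p - 1)) t :=
      Real.hasDerivAt_rpow_const (Or.inl ht.ne')
    have heq : (fun x : ℝ => x ^ (2/p)) =ᶠ[nhds t] hfun p := by
      filter_upwards [Iio_mem_nhds h1] with x hx
      simp [hfun, le_of_lt (mem_Iio.mp hx)]
    have := hd.congr_of_eventuallyEq heq.symm
    simpa [hfun', min_eq_left h1.le] using this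
  · subst h1
    have hL : HasDerivWithinAt (hfun p) (2/p) (Iic 1) 1 := by
      have hd : HasDerivAt (fun x : ℝ => x ^ (2/p)) (2/p * (1:ℝ) ^ (2/p - 1)) 1 :=
        Real.hasDerivAt_rpow_const (Or.inl one_ne_zero)
      have hd' : HasDerivWithinAt (fun x : ℝ => x ^ (2/p)) (2/p) (Iic 1) 1 := by
        simpa using hd.hasDerivWithinAt
      exact hd'.congr (fun x hx => by simp [hfun, (mem_Iic.mp hx)]) (by simp [hfun])
    have hR : HasDerivWithinAt (hfun p) (2/p) (Ici 1) 1 := by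
      have hd : HasDerivAt (fun x : ℝ => (2/p) * x + (1 - 2/p)) (2/p) 1 := by
        simpa using ((hasDerivAt_id (1:ℝ)).const_mul (2/p)).add_const (1 - 2/p)
      refine hd.hasDerivWithinAt.congr (fun x hx => ?_) (by simp [hfun])
      rcases eq_or_lt_of_le (mem_Ici.mp hx) with h | h
      · simp [hfun, ← h]
      · simp [hfun, not_le.mpr h]
    have := hL.union hR
    rw [Iic_union_Ici, hasDerivWithinAt_univ] at this
    simpa [hfun'] using this
  · have hd : HasDerivAt (fun x : ℝ => (2/p) * x + (1 - 2/p)) (2/p) t := by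
      simpa using ((hasDerivAt_id t).const_mul (2/p)).add_const (1 - 2/p)
    have heq : (fun x : ℝ => (2/p) * x + (1 - 2/p)) =ᶠ[nhds t] hfun p := by
      filter_upwards [Ioi_mem_nhds h1] with x hx
      simp [hfun, not_le.mpr (mem_Ioi.mp hx)]
    have := hd.congr_of_eventuallyEq heq.symm
    simpa [hfun', min_eq_right h1.le] using this

lemma hfun_contDiffOn {p : ℝ} (hp : 2 ≤ p) : ContDiffOn ℝ 1 (hfun p) (Ioi 0) := by
  have h01 : (1 : WithTop ℕ∞) = 0 + 1 := by norm_num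
  rw [h01, contDiffOn_succ_iff_deriv_of_isOpen isOpen_Ioi]
  refine ⟨fun t ht => ((hfun_hasDerivAt hp ht).differentiableAt).differentiableWithinAt,
    by simp, ?_⟩
  rw [contDiffOn_zero]
  have : EqOn (deriv (hfun p)) (hfun' p) (Ioi 0) := fun t ht =>
    (hfun_hasDerivAt hp ht).deriv
  refine ContinuousOn.congr ?_ this
  refine ContinuousOn.mul continuousOn_const ?_
  refine ContinuousOn.rpow_const ((continuous_id.min continuous_const).continuousOn) ?_
  intro t ht
  exact Or.inl (ne_of_gt (lt_min ht one_pos))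

lemma bell_eq_hfun {p q : ℝ} (hp : 2 ≤ p) (hq : q = p / (p - 1)) {u v : ℝ}
    (hu : 0 < u) (hv : 0 < v) :
    bell p u v = u ^ p + v ^ q + q * (q - 1) / 8 * (v ^ q * hfun p (u ^ p / v ^ q)) := by
  have hp0 : (0:ℝ) < p := by linarith
  have hpm : (0:ℝ) < p - 1 := by linarith
  have hpne : p ≠ 0 := ne_of_gt hp0
  have hpmne : p - 1 ≠ 0 := ne_of_gt hpm
  have hup : 0 < u ^ p := rpow_pos_of_pos hu p
  have hvq : 0 < v ^ q := rpow_pos_of_pos hv q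
  simp only [bell, hfun]
  by_cases hc : u ^ p ≤ v ^ q
  · rw [if_pos (show u ^ p ≤ v ^ (p / (p - 1)) from hq ▸ hc),
      if_pos ((div_le_one hvq).mpr hc), ← hq]
    have key : v ^ q * (u ^ p / v ^ q) ^ (2/p) = u ^ (2:ℝ) * v ^ (2 - q) := by
      rw [Real.div_rpow hup.le hvq.le, ← Real.rpow_mul hu.le, ← Real.rpow_mul hv.le,
        show p * (2/p) = 2 by field_simp]
      rw [div_eq_mul_inv, ← Real.rpow_neg hv.le, mul_comm (v ^ q), mul_assoc,
        ← Real.rpow_add hv, show -(q * (2/p)) + q = 2 - q by rw [hq]; field_simp <;> ring]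
    rw [key]
  · rw [if_neg (show ¬ u ^ p ≤ v ^ (p / (p - 1)) from hq ▸ hc),
      if_neg (fun h => hc ((div_le_one hvq).mp h)), ← hq]
    have h2q : 2 / q - 1 = 1 - 2 / p := by
      rw [hq]; field_simp <;> ring
    rw [h2q]
    have key : v ^ q * ((2/p) * (u ^ p / v ^ q) + (1 - 2/p)) =
        (2/p) * u ^ p + (1 - 2/p) * v ^ q := by
      field_simp
    rw [key]

set_option maxHeartbeats 1000000 in
theorem bell_partial_deriv_bounds (p q : ℝ) (hp : 2 ≤ p) (hq : q = p / (p - 1)) :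
    ∃ C > 0,
      ContDiffOn ℝ 1 (fun uv : ℝ × ℝ => bell p uv.1 uv.2) (Set.Ioi 0 ×ˢ Set.Ioi 0) ∧
      ∀ u > 0, ∀ v > 0,
        (0 ≤ deriv (fun u' => bell p u' v) u ∧
          deriv (fun u' => bell p u' v) u ≤ C * max (u ^ (p - 1)) v) ∧
        (0 ≤ deriv (fun v' => bell p u v') v ∧
          deriv (fun v' => bell p u v') v ≤ C * v ^ (q - 1)) := by
  have hp0 : (0:ℝ) < p := by linarith
  have hpm : (0:ℝ) < p - 1 := by linarith
  have hq0 : (0:ℝ) < q := by rw [hq]; positivity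
  have hpq : p * q = p + q := by rw [hq]; field_simp; ring
  have hq1 : 1 < q := by
    rw [hq, lt_div_iff₀ hpm]; linarith
  have hq2 : q ≤ 2 := by
    rw [hq, div_le_iff₀ hpm]; linarith
  set δ : ℝ := q * (q - 1) / 8 with hδ
  have hδ0 : 0 ≤ δ := by rw [hδ]; nlinarith
  have hδ1 : δ ≤ 1 := by rw [hδ]; nlinarith
  refine ⟨p + q + 2, by linarith, ?_, ?_⟩
  · -- ContDiffOn
    have hF : ContDiffOn ℝ 1
        (fun uv : ℝ × ℝ => uv.1 ^ p + uv.2 ^ q + δ * (uv.2 ^ q * hfun p (uv.1 ^ p / uv.2 ^ q)))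
        (Set.Ioi 0 ×ˢ Set.Ioi 0) := by
      intro uv huv
      obtain ⟨hu, hv⟩ := Set.mem_prod.mp huv
      have hu : (0:ℝ) < uv.1 := hu
      have hv : (0:ℝ) < uv.2 := hv
      have hup : 0 < uv.1 ^ p := rpow_pos_of_pos hu p
      have hvq : 0 < uv.2 ^ q := rpow_pos_of_pos hv q
      have ht : 0 < uv.1 ^ p / uv.2 ^ q := div_pos hup hvq
      have cA : ContDiffAt ℝ 1 (fun uv : ℝ × ℝ => uv.1 ^ p) uv :=
        contDiff_fst.contDiffAt.rpow_const_of_ne hu.ne'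
      have cB : ContDiffAt ℝ 1 (fun uv : ℝ × ℝ => uv.2 ^ q) uv :=
        contDiff_snd.contDiffAt.rpow_const_of_ne hv.ne'
      have cT : ContDiffAt ℝ 1 (fun uv : ℝ × ℝ => uv.1 ^ p / uv.2 ^ q) uv :=
        cA.div cB hvq.ne'
      have ch : ContDiffAt ℝ 1 (hfun p) (uv.1 ^ p / uv.2 ^ q) :=
        (hfun_contDiffOn hp).contDiffAt (Ioi_mem_nhds ht)
      have comp : ContDiffAt ℝ 1 (fun uv : ℝ × ℝ => hfun p (uv.1 ^ p / uv.2 ^ q)) uv :=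
        (ch.comp uv cT :)
      exact (((cA.add cB).add (contDiffAt_const.mul (cB.mul comp)))).contDiffWithinAt
    refine hF.congr fun uv huv => ?_
    obtain ⟨hu, hv⟩ := Set.mem_prod.mp huv
    exact bell_eq_hfun hp hq hu hv
  · intro u hu v hv
    have hup : 0 < u ^ p := rpow_pos_of_pos hu p
    have hvq : 0 < v ^ q := rpow_pos_of_pos hv q
    set t : ℝ := u ^ p / v ^ q with htd
    have ht : 0 < t := div_pos hup hvq
    set A : ℝ := (min t 1) ^ (2 / p - 1) with hA
    have hA0 : 0 ≤ A := by positivity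
    have hfun'_eq : hfun' p t = (2 / p) * A := rfl
    constructor
    · -- u-derivative
      have h1 : HasDerivAt (fun u' : ℝ => u' ^ p) (p * u ^ (p - 1)) u :=
        Real.hasDerivAt_rpow_const (Or.inl hu.ne')
      have h2 : HasDerivAt (fun u' : ℝ => u' ^ p / v ^ q) (p * u ^ (p - 1) / v ^ q) u :=
        h1.div_const _
      have h3 : HasDerivAt (fun u' : ℝ => hfun p (u' ^ p / v ^ q))
          (hfun' p t * (p * u ^ (p - 1) / v ^ q)) u :=
        ((hfun_hasDerivAt hp ht).comp u h2 :)
      have h4 : HasDerivAt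
          (fun u' : ℝ => u' ^ p + v ^ q + δ * (v ^ q * hfun p (u' ^ p / v ^ q)))
          (p * u ^ (p - 1) + δ * (2 * (u ^ (p - 1) * A))) u := by
        have := (h1.add_const (v ^ q)).add ((h3.const_mul (v ^ q)).const_mul δ)
        refine this.congr_deriv ?_
        rw [hfun'_eq]
        field_simp
      have heq : (fun u' => bell p u' v) =ᶠ[nhds u]
          (fun u' : ℝ => u' ^ p + v ^ q + δ * (v ^ q * hfun p (u' ^ p / v ^ q))) := by
        filter_upwards [Ioi_mem_nhds hu] with x hx
        exact bell_eq_hfun hp hq hx hv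
      have hder : deriv (fun u' => bell p u' v) u
          = p * u ^ (p - 1) + δ * (2 * (u ^ (p - 1) * A)) :=
        heq.deriv_eq.trans h4.deriv
      rw [hder]
      have hX0 : 0 ≤ u ^ (p - 1) := (rpow_pos_of_pos hu _).le
      have hXM : u ^ (p - 1) ≤ max (u ^ (p - 1)) v := le_max_left _ _
      have hM0 : 0 ≤ max (u ^ (p - 1)) v := le_trans hX0 hXM
      have hYM : u ^ (p - 1) * A ≤ max (u ^ (p - 1)) v := by
        by_cases hc : t ≤ 1
        · have hmin : min t 1 = t := min_eq_left hc
          have hkey : u ^ (p - 1) * A = u * v ^ (2 - q) := by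
            rw [hA, hmin, htd, Real.div_rpow hup.le hvq.le, ← Real.rpow_mul hu.le,
              ← Real.rpow_mul hv.le,
              show p * (2/p - 1) = 2 - p by field_simp,
              show q * (2/p - 1) = -(2 - q) by rw [hq]; field_simp <;> ring,
              Real.rpow_neg hv.le, div_inv_eq_mul, ← mul_assoc, ← Real.rpow_add hu,
              show p - 1 + (2 - p) = 1 by ring, Real.rpow_one]
          rw [hkey]
          have hc' : u ^ p ≤ v ^ q := by
            rwa [htd, div_le_one hvq] at hc
          have huv : u ≤ v ^ (q - 1) := by
            have := Real.rpow_le_rpow hup.le hc' (by positivity : (0:ℝ) ≤ 1/p)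
            rwa [← Real.rpow_mul hu.le, ← Real.rpow_mul hv.le,
              show p * (1/p) = 1 by field_simp, Real.rpow_one,
              show q * (1/p) = q - 1 by rw [hq]; field_simp <;> ring] at this
          have : u * v ^ (2 - q) ≤ v ^ (q - 1) * v ^ (2 - q) :=
            mul_le_mul_of_nonneg_right huv (rpow_nonneg hv.le _)
          refine le_trans this ?_
          rw [← Real.rpow_add hv, show q - 1 + (2 - q) = 1 by ring, Real.rpow_one]
          exact le_max_right _ _
        · have hmin : min t 1 = 1 := min_eq_right (le_of_lt (not_le.mp hc))
          rw [hA, hmin, Real.one_rpow, mul_one]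
          exact hXM
      constructor
      · have : 0 ≤ u ^ (p - 1) * A := mul_nonneg hX0 hA0
        nlinarith
      · have hδY : δ * (u ^ (p - 1) * A) ≤ max (u ^ (p - 1)) v := by
          nlinarith [mul_nonneg hX0 hA0]
        nlinarith
    · -- v-derivative
      have h1 : HasDerivAt (fun v' : ℝ => v' ^ q) (q * v ^ (q - 1)) v :=
        Real.hasDerivAt_rpow_const (Or.inl hv.ne')
      have h2 : HasDerivAt (fun v' : ℝ => u ^ p / v' ^ q)
          ((0 * v ^ q - u ^ p * (q * v ^ (q - 1))) / (v ^ q) ^ 2) v :=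
        (hasDerivAt_const v (u ^ p)).div h1 hvq.ne'
      have h3 : HasDerivAt (fun v' : ℝ => hfun p (u ^ p / v' ^ q))
          (hfun' p t * ((0 * v ^ q - u ^ p * (q * v ^ (q - 1))) / (v ^ q) ^ 2)) v :=
        ((hfun_hasDerivAt hp ht).comp v h2 :)
      have h4 : HasDerivAt (fun v' : ℝ => v' ^ q * hfun p (u ^ p / v' ^ q))
          (q * v ^ (q - 1) * hfun p t + v ^ q *
            (hfun' p t * ((0 * v ^ q - u ^ p * (q * v ^ (q - 1))) / (v ^ q) ^ 2))) v := by
        have := h1.mul h3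
        exact this
      have h5 : HasDerivAt
          (fun v' : ℝ => u ^ p + v' ^ q + δ * (v' ^ q * hfun p (u ^ p / v' ^ q)))
          (q * v ^ (q - 1) + δ * (q * v ^ (q - 1) * (hfun p t - t * hfun' p t))) v := by
        have := (h1.const_add (u ^ p)).add (h4.const_mul δ)
        refine this.congr_deriv ?_
        rw [htd]
        field_simp
        ring
      have heq : (fun v' => bell p u v') =ᶠ[nhds v]
          (fun v' : ℝ => u ^ p + v' ^ q + δ * (v' ^ q * hfun p (u ^ p / v' ^ q))) := by
        filter_upwards [Ioi_mem_nhds hv] with x hx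
        exact bell_eq_hfun hp hq hu hx
      have hder : deriv (fun v' => bell p u v') v
          = q * v ^ (q - 1) + δ * (q * v ^ (q - 1) * (hfun p t - t * hfun' p t)) :=
        heq.deriv_eq.trans h5.deriv
      rw [hder]
      have hE0 : 0 ≤ hfun p t - t * hfun' p t ∧ hfun p t - t * hfun' p t ≤ 1 := by
        have h2p1 : 2 / p ≤ 1 := by rw [div_le_one hp0]; linarith
        have h2p0 : 0 < 2 / p := by positivity
        by_cases hc : t ≤ 1
        · have hmin : min t 1 = t := min_eq_left hc
          have hmul : t * t ^ (2/p - 1) = t ^ (2/p) := by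
            have h := Real.rpow_add ht 1 (2/p - 1)
            rw [show (1:ℝ) + (2/p - 1) = 2/p by ring] at h
            rw [h, Real.rpow_one]
          have hfte : hfun p t = t ^ (2/p) := by rw [hfun, if_pos hc]
          have hfte' : t * hfun' p t = (2/p) * t ^ (2/p) := by
            rw [hfun', hmin]; rw [← hmul]; ring
          rw [hfte, hfte']
          have htp1 : t ^ (2/p) ≤ 1 := Real.rpow_le_one ht.le hc (by positivity)
          have htp0 : 0 ≤ t ^ (2/p) := by positivity
          constructor <;> nlinarith
        · have hmin : min t 1 = 1 := min_eq_right (le_of_lt (not_le.mp hc))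
          have hfte : hfun p t = (2/p) * t + (1 - 2/p) := by rw [hfun, if_neg hc]
          have hfte' : t * hfun' p t = (2/p) * t := by
            rw [hfun', hmin, Real.one_rpow, mul_one]; ring
          rw [hfte, hfte']
          constructor <;> nlinarith
      obtain ⟨hE0, hE1⟩ := hE0
      have hv0 : 0 < v ^ (q - 1) := rpow_pos_of_pos hv _
      have hqv : 0 < q * v ^ (q - 1) := mul_pos hq0 hv0
      have h6 : 0 ≤ δ * (q * v ^ (q - 1) * (hfun p t - t * hfun' p t)) :=
        mul_nonneg hδ0 (mul_nonneg hqv.le hE0)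
      have h7 : δ * (q * v ^ (q - 1) * (hfun p t - t * hfun' p t)) ≤ q * v ^ (q - 1) := by
        nlinarith [mul_nonneg (mul_nonneg hqv.le hE0) (sub_nonneg.mpr hδ1),
          mul_nonneg hqv.le (sub_nonneg.mpr hE1)]
      constructor
      · linarith
      · nlinarith [h7, mul_nonneg (show (0:ℝ) ≤ p + 2 - q by linarith) hv0.le]
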